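/- Let v_1, …, v_m ∈ ℝ^d and w_1, …, w_n ∈ ℝ^d all have nonnegative coordinates, let f : ℝ → ℝ be strictly increasing, and let A be the m×n matrix with A_{ij} = f(⟨v_i, w_j⟩). If i is a minimal node of A, then v_i is an extreme point of the Minkowski sum conv{v_1, …, v_m} + ℝ^d_{≥0}, where ℝ^d_{≥0} is the nonnegative orthant. If i is a maximal node of A, then v_i is an extreme point of conv{v_1, …, v_m} + ℝ^d_{≤0}, where ℝ^d_{≤0} is the nonpositive orthant. -/

import Mathlib

open Pointwise

private def dotL {d : ℕ} (u : Fin d → ℝ) : (Fin d → ℝ) →ₗ[ℝ] ℝ where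
  toFun x := ∑ k, x k * u k
  map_add' x y := by simp [add_mul, Finset.sum_add_distrib]
  map_smul' c x := by simp [Finset.mul_sum, mul_assoc]

private lemma dotL_apply {d : ℕ} (u x : Fin d → ℝ) : dotL u x = ∑ k, x k * u k := rfl

private lemma extreme_aux {m d : ℕ} (v : Fin m → Fin d → ℝ) (i : Fin m)
    (L : (Fin d → ℝ) →ₗ[ℝ] ℝ) (C : Set (Fin d → ℝ))
    (hC0 : (0 : Fin d → ℝ) ∈ C)
    (hCpos : ∀ p ∈ C, 0 ≤ L p)
    (hCzero : ∀ p₁ ∈ C, ∀ p₂ ∈ C, ∀ a b : ℝ, 0 < a → 0 < b →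
        a • p₁ + b • p₂ = 0 → p₁ = 0 ∧ p₂ = 0)
    (hmin : ∀ k, k ≠ i → L (v i) < L (v k)) :
    v i ∈ Set.extremePoints ℝ (convexHull ℝ (Set.range v) + C) := by
  -- L (v i) is a lower bound on the convex hull
  have hconv : ∀ x ∈ convexHull ℝ (Set.range v), L (v i) ≤ L x := by
    intro x hx
    have hsub : Set.range v ⊆ {x : Fin d → ℝ | L (v i) ≤ L x} := by
      rintro y ⟨k, rfl⟩
      simp only [Set.mem_setOf_eq]
      rcases eq_or_ne k i with rfl | hk
      · exact le_rfl
      · exact (hmin k hk).le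
    exact convexHull_min hsub (convex_halfSpace_ge L.isLinear (L (v i))) hx
  -- equality case
  have heq : ∀ x ∈ convexHull ℝ (Set.range v), L x = L (v i) → x = v i := by
    intro x hx hLx
    rw [convexHull_range_eq_exists_affineCombination] at hx
    obtain ⟨s, wt, hw0, hw1, rfl⟩ := hx
    rw [Finset.affineCombination_eq_linear_combination s v wt hw1] at hLx ⊢
    have hLsum : ∑ k ∈ s, wt k * L (v k) = L (v i) := by
      rw [← hLx, map_sum]; simp [map_smul]
    have hterm : ∀ k ∈ s, wt k * (L (v k) - L (v i)) = 0 := by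
      intro k hk
      have hsum0 : ∑ k ∈ s, wt k * (L (v k) - L (v i)) = 0 := by
        simp only [mul_sub]
        rw [Finset.sum_sub_distrib, hLsum, ← Finset.sum_mul, hw1, one_mul, sub_self]
      refine (Finset.sum_eq_zero_iff_of_nonneg ?_).mp hsum0 k hk
      intro k hk
      rcases eq_or_ne k i with rfl | hki
      · simp
      · exact mul_nonneg (hw0 k hk) (sub_nonneg.mpr (hmin k hki).le)
    have hvi : ∀ k ∈ s, wt k • v k = wt k • v i := by
      intro k hk
      rcases eq_or_ne k i with rfl | hki
      · rfl
      · have h0 : wt k = 0 := by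
          have := hterm k hk
          have hne : L (v k) - L (v i) ≠ 0 := sub_ne_zero.mpr (hmin k hki).ne'
          exact (mul_eq_zero.mp this).resolve_right hne
        simp [h0]
    rw [Finset.sum_congr rfl hvi, ← Finset.sum_smul, hw1, one_smul]
  constructor
  · exact ⟨v i, subset_convexHull ℝ _ ⟨i, rfl⟩, 0, hC0, by simp⟩
  rintro x₁ ⟨c₁, hc₁, p₁, hp₁, rfl⟩ x₂ ⟨c₂, hc₂, p₂, hp₂, rfl⟩ hseg
  obtain ⟨a, b, ha, hb, hab, hsum'⟩ := hseg
  have hsum : a • (c₁ + p₁) + b • (c₂ + p₂) = v i := hsum'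
  have hL1 : L (v i) ≤ L (c₁ + p₁) := by
    rw [map_add]
    have := hconv c₁ hc₁; have := hCpos p₁ hp₁; linarith
  have hL2 : L (v i) ≤ L (c₂ + p₂) := by
    rw [map_add]
    have := hconv c₂ hc₂; have := hCpos p₂ hp₂; linarith
  have hLsum : a * L (c₁ + p₁) + b * L (c₂ + p₂) = L (v i) := by
    have h := congrArg L hsum
    rwa [map_add, map_smul, map_smul, smul_eq_mul, smul_eq_mul] at h
  have ht : a * L (v i) + b * L (v i) = L (v i) := by linear_combination L (v i) * hab
  have hLe1 : L (c₁ + p₁) = L (v i) := by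
    refine le_antisymm ?_ hL1
    have h2 := mul_le_mul_of_nonneg_left hL2 hb.le
    have hat : a * L (c₁ + p₁) ≤ a * L (v i) := by linarith
    exact le_of_mul_le_mul_left hat ha
  have hLe2 : L (c₂ + p₂) = L (v i) := by
    refine le_antisymm ?_ hL2
    have h1 := mul_le_mul_of_nonneg_left hL1 ha.le
    have hbt : b * L (c₂ + p₂) ≤ b * L (v i) := by linarith
    exact le_of_mul_le_mul_left hbt hb
  have hc1 : c₁ = v i := by
    apply heq c₁ hc₁
    rw [map_add] at hLe1
    have := hconv c₁ hc₁; have := hCpos p₁ hp₁; linarith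
  have hc2 : c₂ = v i := by
    apply heq c₂ hc₂
    rw [map_add] at hLe2
    have := hconv c₂ hc₂; have := hCpos p₂ hp₂; linarith
  subst hc1; subst hc2
  have hp0 : a • p₁ + b • p₂ = 0 := by
    funext k
    have hk := congrFun hsum k
    simp only [Pi.add_apply, Pi.smul_apply, smul_eq_mul, Pi.zero_apply] at hk ⊢
    linear_combination hk - v i k * hab
  obtain ⟨h1, h2⟩ := hCzero p₁ hp₁ p₂ hp₂ a b ha hb hp0
  simp [h1, h2]

theorem stmt13 {m n d : ℕ} (v : Fin m → Fin d → ℝ) (w : Fin n → Fin d → ℝ)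
    (hv : ∀ i k, 0 ≤ v i k) (hw : ∀ j k, 0 ≤ w j k)
    (f : ℝ → ℝ) (hf : StrictMono f) (A : Matrix (Fin m) (Fin n) ℝ)
    (hA : ∀ i j, A i j = f (∑ k, v i k * w j k))
    (i : Fin m) :
    ((∃ j, ∀ k, k ≠ i → A i j < A k j) →
      v i ∈ Set.extremePoints ℝ
        (convexHull ℝ (Set.range v) + {x : Fin d → ℝ | ∀ k, 0 ≤ x k})) ∧
    ((∃ j, ∀ k, k ≠ i → A k j < A i j) →
      v i ∈ Set.extremePoints ℝ
        (convexHull ℝ (Set.range v) + {x : Fin d → ℝ | ∀ k, x k ≤ 0})) := by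
  constructor
  · rintro ⟨j, hj⟩
    refine extreme_aux v i (dotL (w j)) _ (fun k => le_refl 0) ?_ ?_ ?_
    · intro p hp
      rw [dotL_apply]
      exact Finset.sum_nonneg fun k _ => mul_nonneg (hp k) (hw j k)
    · intro p₁ hp₁ p₂ hp₂ a b ha hb h0
      have key : ∀ k, p₁ k = 0 ∧ p₂ k = 0 := by
        intro k
        have hk := congrFun h0 k
        simp only [Pi.add_apply, Pi.smul_apply, smul_eq_mul, Pi.zero_apply] at hk
        have h1 := mul_nonneg ha.le (hp₁ k)
        have h2 := mul_nonneg hb.le (hp₂ k)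
        constructor <;> [skip; skip] <;>
          · nlinarith [hp₁ k, hp₂ k]
      exact ⟨funext fun k => (key k).1, funext fun k => (key k).2⟩
    · intro k hk
      have := hj k hk
      rw [hA, hA] at this
      have := hf.lt_iff_lt.mp this
      simpa [dotL_apply] using this
  · rintro ⟨j, hj⟩
    refine extreme_aux v i (dotL (-(w j))) _ (fun k => le_refl 0) ?_ ?_ ?_
    · intro p hp
      rw [dotL_apply]
      refine Finset.sum_nonneg fun k _ => ?_
      have := hp k; have := hw j k
      simp only [Pi.neg_apply]
      nlinarith
    · intro p₁ hp₁ p₂ hp₂ a b ha hb h0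
      have key : ∀ k, p₁ k = 0 ∧ p₂ k = 0 := by
        intro k
        have hk := congrFun h0 k
        simp only [Pi.add_apply, Pi.smul_apply, smul_eq_mul, Pi.zero_apply] at hk
        have h1 := mul_nonpos_of_nonneg_of_nonpos ha.le (hp₁ k)
        have h2 := mul_nonpos_of_nonneg_of_nonpos hb.le (hp₂ k)
        constructor <;> nlinarith [hp₁ k, hp₂ k]
      exact ⟨funext fun k => (key k).1, funext fun k => (key k).2⟩
    · intro k hk
      have := hj k hk
      rw [hA, hA] at this
      have hlt := hf.lt_iff_lt.mp this
      simp only [dotL_apply, Pi.neg_apply]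
      have e1 : ∑ l, v i l * -w j l = -∑ l, v i l * w j l := by
        simp [Finset.sum_neg_distrib, mul_neg]
      have e2 : ∑ l, v k l * -w j l = -∑ l, v k l * w j l := by
        simp [Finset.sum_neg_distrib, mul_neg]
      rw [e1, e2]; linarith
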